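/- On U = {(x,y) ∈ ℝ² : x > 0, y > 0}, the vector fields X₁ = (x,0), X₂ = (0,−y), X₃ = (0,xy) of the viral infection model dх/dt = (α(t)−δ)x, dy/dt = β(t)xy − γ(t)y are Hamiltonian with respect to the symplectic form ω = (xy)^{−1} dx∧dy with Hamiltonian functions h₁ = ln y, h₂ = ln x, h₃ = −x, respectively (i.e. ∂h_i/∂x = −(xy)^{−1}·X_i² and ∂h_i/∂y = (xy)^{−1}·X_i¹). Moreover, under the Poisson bracket {g,h}_ω = xy(∂g/∂x·∂h/∂y − ∂g/∂y·∂h/∂x) these satisfy {h₁,h₂}_ω = −1, {h₁,h₃}_ω = −h₃, {h₂,h₃}_ω = 0, so ⟨h₁,h₂,h₃,1⟩ is closed under the Poisson bracket (a centrally extended Lie algebra ℝ⋉ℝ², class I₁₄B); hence the viral infection model with constant infection power is a Lie–Hamilton system. -/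

import Mathlib

namespace Stmt19

/-- Partial derivative in the x-direction. -/
noncomputable def pdx (f : ℝ × ℝ → ℝ) (p : ℝ × ℝ) : ℝ := fderiv ℝ f p (1, 0)

/-- Partial derivative in the y-direction. -/
noncomputable def pdy (f : ℝ × ℝ → ℝ) (p : ℝ × ℝ) : ℝ := fderiv ℝ f p (0, 1)

/-- Poisson bracket induced by ω = (xy)⁻¹ dx∧dy. -/
noncomputable def pbw (g h : ℝ × ℝ → ℝ) (p : ℝ × ℝ) : ℝ :=
  p.1 * p.2 * (pdx g p * pdy h p - pdy g p * pdx h p)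

/-- Domain: the open first quadrant. -/
def U : Set (ℝ × ℝ) := {p | 0 < p.1 ∧ 0 < p.2}

/-- Vector fields of the viral infection model with constant infection power. -/
def X1 : ℝ × ℝ → ℝ × ℝ := fun p => (p.1, 0)
def X2 : ℝ × ℝ → ℝ × ℝ := fun p => (0, -p.2)
def X3 : ℝ × ℝ → ℝ × ℝ := fun p => (0, p.1 * p.2)

noncomputable def h1 : ℝ × ℝ → ℝ := fun p => Real.log p.2
noncomputable def h2 : ℝ × ℝ → ℝ := fun p => Real.log p.1
noncomputable def h3 : ℝ × ℝ → ℝ := fun p => -p.1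

lemma pd_h1 (p : ℝ × ℝ) (hy : 0 < p.2) :
    pdx h1 p = 0 ∧ pdy h1 p = p.2⁻¹ := by
  have hd : HasFDerivAt h1 (p.2⁻¹ • (ContinuousLinearMap.snd ℝ ℝ ℝ)) p := by
    exact (Real.hasDerivAt_log hy.ne').comp_hasFDerivAt p hasFDerivAt_snd
  constructor <;> simp [pdx, pdy, hd.fderiv]

lemma pd_h2 (p : ℝ × ℝ) (hx : 0 < p.1) :
    pdx h2 p = p.1⁻¹ ∧ pdy h2 p = 0 := by
  have hd : HasFDerivAt h2 (p.1⁻¹ • (ContinuousLinearMap.fst ℝ ℝ ℝ)) p := by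
    exact (Real.hasDerivAt_log hx.ne').comp_hasFDerivAt p hasFDerivAt_fst
  constructor <;> simp [pdx, pdy, hd.fderiv]

lemma pd_h3 (p : ℝ × ℝ) :
    pdx h3 p = -1 ∧ pdy h3 p = 0 := by
  have hd : HasFDerivAt h3 (-(ContinuousLinearMap.fst ℝ ℝ ℝ)) p := hasFDerivAt_fst.neg
  constructor <;> simp [pdx, pdy, hd.fderiv]

theorem stmt_19 : ∀ p ∈ U,
    (pdx h1 p = -((p.1 * p.2)⁻¹ * (X1 p).2) ∧ pdy h1 p = (p.1 * p.2)⁻¹ * (X1 p).1) ∧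
    (pdx h2 p = -((p.1 * p.2)⁻¹ * (X2 p).2) ∧ pdy h2 p = (p.1 * p.2)⁻¹ * (X2 p).1) ∧
    (pdx h3 p = -((p.1 * p.2)⁻¹ * (X3 p).2) ∧ pdy h3 p = (p.1 * p.2)⁻¹ * (X3 p).1) ∧
    pbw h1 h2 p = -1 ∧ pbw h1 h3 p = -h3 p ∧ pbw h2 h3 p = 0 := by
  rintro p ⟨hx, hy⟩
  obtain ⟨e1, e2⟩ := pd_h1 p hy
  obtain ⟨e3, e4⟩ := pd_h2 p hx
  obtain ⟨e5, e6⟩ := pd_h3 p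
  refine ⟨⟨by simp [e1, X1], ?_⟩, ⟨?_, by simp [e4, X2]⟩, ⟨?_, by simp [e6, X3]⟩, ?_, ?_, ?_⟩
  · rw [e2]; field_simp [X1]; simp [X1]
  · rw [e3]; field_simp [X2]; simp [X2]
  · rw [e5]; field_simp [X3]; simp [X3]
  · rw [pbw, e1, e2, e3, e4]; field_simp; ring
  · rw [pbw, e1, e2, e5, e6, h3]; field_simp; ring
  · rw [pbw, e3, e4, e5, e6]; ring

end Stmt19
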